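/- arXiv:1911.07029 — 2 statements merged into one kernel-verified Lean document; each statement's English description precedes it below -/
import Mathlib

section
/- Let f : [0,∞) → [0,∞) be a probability density (∫₀^∞ f(t) dt = 1) with cumulative distribution function F(x) = ∫₀^x f(t) dt, and let a > 0. Assume t ↦ t²·f(t) is integrable on [0,∞). Then ∫₀^∞ x²·exp(−a·x)·F(x) dx = ( a·∫₀^∞ t²·exp(−a·t)·f(t) dt + 2·∫₀^∞ t·exp(−a·t)·f(t) dt ) / a² + ( 2·∫₀^∞ exp(−a·t)·f(t) dt ) / a³. -/
open MeasureTheory Real Set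

open Filter

lemma tendsto_pow_exp_aux {a : ℝ} (ha : 0 < a) (n : ℕ) :
    Tendsto (fun x : ℝ => x ^ n * Real.exp (-a * x)) atTop (nhds 0) := by
  have h := (tendsto_pow_mul_exp_neg_atTop_nhds_zero n).comp
    (tendsto_id.const_mul_atTop ha)
  have h2 := h.mul_const ((a : ℝ) ^ n)⁻¹
  have heq : (fun x : ℝ => x ^ n * Real.exp (-a * x))
      = fun x => ((fun y : ℝ => y ^ n * Real.exp (-y)) (a * x)) * (a ^ n)⁻¹ := by
    funext x
    simp only [mul_pow, neg_mul]
    field_simp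
  rw [heq]
  simpa using h2

lemma hasDerivAt_aux {a : ℝ} (ha : 0 < a) (x : ℝ) :
    HasDerivAt (fun x : ℝ => -(Real.exp (-a*x) * (x^2/a + 2*x/a^2 + 2/a^3)))
      (x ^ 2 * Real.exp (-a * x)) x := by
  have h1 : HasDerivAt (fun x : ℝ => Real.exp (-a*x)) (Real.exp (-a*x) * (-a)) x := by
    simpa using ((hasDerivAt_id x).const_mul (-a)).exp
  have h2 : HasDerivAt (fun x : ℝ => x^2/a + 2*x/a^2 + 2/a^3)
      (2*x/a + 2/a^2) x := by
    have := (((hasDerivAt_pow 2 x).div_const a).add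
      (((hasDerivAt_id x).const_mul 2).div_const (a^2))).add_const (2/a^3)
    exact this.congr_deriv (by norm_num)
  have := (h1.mul h2).neg
  exact this.congr_deriv (by field_simp; ring)

lemma key_integral {a : ℝ} (ha : 0 < a) (t : ℝ) :
    (∫ x in Ioi t, x ^ 2 * Real.exp (-a * x)) =
      Real.exp (-a*t) * (t^2/a + 2*t/a^2 + 2/a^3) := by
  have htend : Tendsto (fun x : ℝ => -(Real.exp (-a*x) * (x^2/a + 2*x/a^2 + 2/a^3)))
      atTop (nhds 0) := by
    have h2 := tendsto_pow_exp_aux ha 2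
    have h1 := tendsto_pow_exp_aux ha 1
    have h0 := tendsto_pow_exp_aux ha 0
    have := (((h2.div_const a).add ((h1.const_mul 2).div_const (a^2))).add
      ((h0.const_mul 2).div_const (a^3))).neg
    have heq : (fun x : ℝ => -(Real.exp (-a*x) * (x^2/a + 2*x/a^2 + 2/a^3)))
        = fun x => -((x^2 * Real.exp (-a*x))/a + (2 * (x^1 * Real.exp (-a*x)))/a^2
            + (2 * (x^0 * Real.exp (-a*x)))/a^3) := by
      funext x; ring
    rw [heq]
    simpa using this
  have := integral_Ioi_of_hasDerivAt_of_nonneg' (a := t)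
    (fun x _ => hasDerivAt_aux ha x)
    (fun x _ => by positivity) htend
  rw [this]; ring

lemma key_integrable {a : ℝ} (ha : 0 < a) (t : ℝ) :
    IntegrableOn (fun x => x ^ 2 * Real.exp (-a * x)) (Ioi t) := by
  have htend : Tendsto (fun x : ℝ => -(Real.exp (-a*x) * (x^2/a + 2*x/a^2 + 2/a^3)))
      atTop (nhds 0) := by
    have h2 := tendsto_pow_exp_aux ha 2
    have h1 := tendsto_pow_exp_aux ha 1
    have h0 := tendsto_pow_exp_aux ha 0
    have := (((h2.div_const a).add ((h1.const_mul 2).div_const (a^2))).add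
      ((h0.const_mul 2).div_const (a^3))).neg
    have heq : (fun x : ℝ => -(Real.exp (-a*x) * (x^2/a + 2*x/a^2 + 2/a^3)))
        = fun x => -((x^2 * Real.exp (-a*x))/a + (2 * (x^1 * Real.exp (-a*x)))/a^2
            + (2 * (x^0 * Real.exp (-a*x)))/a^3) := by
      funext x; ring
    rw [heq]
    simpa using this
  exact integrableOn_Ioi_deriv_of_nonneg' (a := t)
    (fun x _ => hasDerivAt_aux ha x) (fun x _ => by positivity) htend


noncomputable def Hker (f : ℝ → ℝ) (a : ℝ) (x t : ℝ) : ℝ :=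
  if t < x then x ^ 2 * Real.exp (-a * x) * f t else 0


/-- Lemma 3: the Laplace transform of `x ↦ x²·F(x)` at `a`, where `F` is the CDF
of a density `f` on `[0,∞)`, written with explicit integrals. -/
theorem laplace_transform_x_sq_cdf
    (f : ℝ → ℝ) (a : ℝ) (ha : 0 < a)
    (hfm : Measurable f) (hf_nonneg : ∀ t, 0 ≤ f t)
    (hf_prob : (∫ t in Set.Ioi (0 : ℝ), f t) = 1)
    (hf2 : IntegrableOn (fun t => t ^ 2 * f t) (Set.Ioi (0 : ℝ)))
    (F : ℝ → ℝ) (hF : ∀ x, F x = ∫ t in (0 : ℝ)..x, f t) :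
    (∫ x in Set.Ioi (0 : ℝ), x ^ 2 * Real.exp (-a * x) * F x) =
      (a * (∫ t in Set.Ioi (0 : ℝ), t ^ 2 * Real.exp (-a * t) * f t)
          + 2 * (∫ t in Set.Ioi (0 : ℝ), t * Real.exp (-a * t) * f t)) / a ^ 2
        + (2 * (∫ t in Set.Ioi (0 : ℝ), Real.exp (-a * t) * f t)) / a ^ 3 := by
  have ha' : (a : ℝ) ≠ 0 := ne_of_gt ha
  set μ : Measure ℝ := volume.restrict (Set.Ioi (0 : ℝ)) with hμ
  -- f is integrable on Ioi 0
  have hf_int : IntegrableOn f (Set.Ioi (0 : ℝ)) := by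
    by_contra h
    rw [integral_undef h] at hf_prob
    norm_num at hf_prob
  -- t * f t is integrable on Ioi 0
  have htf : IntegrableOn (fun t => t * f t) (Set.Ioi (0 : ℝ)) := by
    refine Integrable.mono (hf_int.add hf2) ?_ ?_
    · exact (measurable_id.mul hfm).aestronglyMeasurable
    · rw [ae_restrict_iff' measurableSet_Ioi]
      refine Eventually.of_forall fun t ht => ?_
      have ht0 : (0:ℝ) < t := ht
      have h1 : t * f t ≤ f t + t ^ 2 * f t := by
        nlinarith [hf_nonneg t, sq_nonneg (t - 1)]
      simp only [Real.norm_eq_abs, Pi.add_apply]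
      rw [abs_of_nonneg (mul_nonneg ht0.le (hf_nonneg t)),
        abs_of_nonneg (add_nonneg (hf_nonneg t) (mul_nonneg (sq_nonneg t) (hf_nonneg t)))]
      exact h1
  -- exponential-weighted integrability
  have hexp_le : ∀ t : ℝ, 0 < t → Real.exp (-a * t) ≤ 1 := by
    intro t ht
    rw [Real.exp_le_one_iff]
    nlinarith
  have I0int : IntegrableOn (fun t => Real.exp (-a * t) * f t) (Set.Ioi (0 : ℝ)) := by
    refine Integrable.mono hf_int ((((measurable_id.const_mul (-a)).exp).mul hfm)).aestronglyMeasurable ?_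
    rw [ae_restrict_iff' measurableSet_Ioi]
    refine Eventually.of_forall fun t ht => ?_
    rw [Real.norm_eq_abs, Real.norm_eq_abs,
      abs_of_nonneg (mul_nonneg (Real.exp_pos _).le (hf_nonneg t)),
      abs_of_nonneg (hf_nonneg t)]
    calc Real.exp (-a * t) * f t ≤ 1 * f t :=
          mul_le_mul_of_nonneg_right (hexp_le t ht) (hf_nonneg t)
      _ = f t := one_mul _
  have I1int : IntegrableOn (fun t => t * Real.exp (-a * t) * f t) (Set.Ioi (0 : ℝ)) := by
    refine Integrable.mono htf
      ((measurable_id.mul ((measurable_id.const_mul (-a)).exp)).mul hfm).aestronglyMeasurable ?_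
    rw [ae_restrict_iff' measurableSet_Ioi]
    refine Eventually.of_forall fun t ht => ?_
    have ht0 : (0:ℝ) < t := ht
    rw [Real.norm_eq_abs, Real.norm_eq_abs,
      abs_of_nonneg (mul_nonneg (mul_nonneg ht0.le (Real.exp_pos _).le) (hf_nonneg t)),
      abs_of_nonneg (mul_nonneg ht0.le (hf_nonneg t))]
    calc t * Real.exp (-a * t) * f t ≤ t * 1 * f t := by
          have := hexp_le t ht0
          have h := mul_le_mul_of_nonneg_left this (le_of_lt ht0)
          exact mul_le_mul_of_nonneg_right h (hf_nonneg t)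
      _ = t * f t := by ring
  have I2int : IntegrableOn (fun t => t ^ 2 * Real.exp (-a * t) * f t) (Set.Ioi (0 : ℝ)) := by
    refine Integrable.mono hf2
      (((measurable_id.pow_const 2).mul ((measurable_id.const_mul (-a)).exp)).mul hfm).aestronglyMeasurable ?_
    rw [ae_restrict_iff' measurableSet_Ioi]
    refine Eventually.of_forall fun t ht => ?_
    have ht0 : (0:ℝ) < t := ht
    rw [Real.norm_eq_abs, Real.norm_eq_abs,
      abs_of_nonneg (mul_nonneg (mul_nonneg (sq_nonneg t) (Real.exp_pos _).le) (hf_nonneg t)),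
      abs_of_nonneg (mul_nonneg (sq_nonneg t) (hf_nonneg t))]
    calc t ^ 2 * Real.exp (-a * t) * f t ≤ t ^ 2 * 1 * f t := by
          have := hexp_le t ht0
          have h := mul_le_mul_of_nonneg_left this (by positivity : (0:ℝ) ≤ t ^ 2)
          exact mul_le_mul_of_nonneg_right h (hf_nonneg t)
      _ = t ^ 2 * f t := by ring
  -- measurability of the kernel
  have hHm : Measurable (Function.uncurry (Hker f a)) := by
    unfold Function.uncurry Hker
    exact Measurable.ite (measurableSet_lt measurable_snd measurable_fst)
      (((measurable_fst.pow_const 2).mul ((measurable_fst.const_mul (-a)).exp)).mul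
        (hfm.comp measurable_snd)) measurable_const
  have hH_nonneg : ∀ x t, 0 ≤ Hker f a x t := by
    intro x t
    unfold Hker
    split
    · exact mul_nonneg (mul_nonneg (sq_nonneg x) (Real.exp_pos _).le) (hf_nonneg t)
    · exact le_refl 0
  -- inner integral over t, for x > 0
  have hinner_t : ∀ x ∈ Set.Ioi (0:ℝ), (∫ t, Hker f a x t ∂μ)
      = x ^ 2 * Real.exp (-a * x) * F x := by
    intro x hx
    have hind : (fun t => Hker f a x t)
        = (Set.Iio x).indicator (fun t => x ^ 2 * Real.exp (-a * x) * f t) := by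
      funext t; unfold Hker; simp [Set.indicator_apply, Set.mem_Iio]
    rw [hμ, hind, setIntegral_indicator measurableSet_Iio, Set.Ioi_inter_Iio,
      integral_const_mul, hF x, intervalIntegral.integral_of_le (le_of_lt hx),
      ← integral_Ioc_eq_integral_Ioo]
  -- inner integral over x, for t > 0
  have hinner_x : ∀ t ∈ Set.Ioi (0:ℝ), (∫ x, Hker f a x t ∂μ)
      = Real.exp (-a * t) * (t ^ 2 / a + 2 * t / a ^ 2 + 2 / a ^ 3) * f t := by
    intro t ht
    have hind : (fun x => Hker f a x t)
        = (Set.Ioi t).indicator (fun x => x ^ 2 * Real.exp (-a * x) * f t) := by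
      funext x; unfold Hker; simp [Set.indicator_apply, Set.mem_Ioi]
    rw [hμ, hind, setIntegral_indicator measurableSet_Ioi, Set.Ioi_inter_Ioi,
      max_eq_right (le_of_lt ht), integral_mul_const, key_integral ha t]
  -- integrability of the kernel on the product
  have hHint : Integrable (Function.uncurry (Hker f a)) (μ.prod μ) := by
    rw [integrable_prod_iff' hHm.aestronglyMeasurable]
    constructor
    · rw [hμ, ae_restrict_iff' measurableSet_Ioi]
      refine Eventually.of_forall fun t ht => ?_
      have hind : (fun x => Function.uncurry (Hker f a) (x, t))
          = (Set.Ioi t).indicator (fun x => x ^ 2 * Real.exp (-a * x) * f t) := by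
        funext x; unfold Function.uncurry Hker
        simp [Set.indicator_apply, Set.mem_Ioi]
      rw [hind, integrable_indicator_iff measurableSet_Ioi, IntegrableOn,
        Measure.restrict_restrict measurableSet_Ioi]
      exact Integrable.mono_measure ((key_integrable ha t).mul_const (f t))
        (Measure.restrict_mono inter_subset_left le_rfl)
    · have hnorm : ∀ t : ℝ, (fun x => ‖Function.uncurry (Hker f a) (x, t)‖)
          = fun x => Hker f a x t := by
        intro t; funext x
        simp only [Function.uncurry_apply_pair, Real.norm_eq_abs]
        exact abs_of_nonneg (hH_nonneg x t)
      have heq : ∀ᵐ t ∂μ, (1/a) * (t ^ 2 * Real.exp (-a * t) * f t)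
            + (2/a^2) * (t * Real.exp (-a * t) * f t)
            + (2/a^3) * (Real.exp (-a * t) * f t)
          = ∫ x, ‖Function.uncurry (Hker f a) (x, t)‖ ∂μ := by
        rw [hμ, ae_restrict_iff' measurableSet_Ioi]
        refine Eventually.of_forall fun t ht => ?_
        rw [hnorm t]
        rw [show (∫ x, Hker f a x t ∂μ) = _ from hinner_x t ht]
        field_simp
      refine Integrable.congr ?_ heq
      exact (((I2int.const_mul (1/a)).add (I1int.const_mul (2/a^2))).add
        (I0int.const_mul (2/a^3)))
  -- Fubini
  have hswap := integral_integral_swap hHint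
  have hL : (∫ x, x ^ 2 * Real.exp (-a * x) * F x ∂μ)
      = ∫ x, ∫ t, Hker f a x t ∂μ ∂μ := by
    rw [hμ]
    exact (setIntegral_congr_fun measurableSet_Ioi fun x hx => (hinner_t x hx).symm)
  have hR : (∫ t, ∫ x, Hker f a x t ∂μ ∂μ)
      = (1/a) * (∫ t, t ^ 2 * Real.exp (-a * t) * f t ∂μ)
        + (2/a^2) * (∫ t, t * Real.exp (-a * t) * f t ∂μ)
        + (2/a^3) * (∫ t, Real.exp (-a * t) * f t ∂μ) := by
    have h1 : (∫ t, ∫ x, Hker f a x t ∂μ ∂μ)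
        = ∫ t, ((1/a) * (t ^ 2 * Real.exp (-a * t) * f t)
            + (2/a^2) * (t * Real.exp (-a * t) * f t)
            + (2/a^3) * (Real.exp (-a * t) * f t)) ∂μ := by
      rw [hμ]
      refine setIntegral_congr_fun measurableSet_Ioi fun t ht => ?_
      rw [show (∫ x, Hker f a x t ∂volume.restrict (Set.Ioi (0:ℝ))) = _ from hinner_x t ht]
      field_simp
    have hadd : Integrable (fun t => 1/a * (t ^ 2 * Real.exp (-a*t) * f t)
        + 2/a^2 * (t * Real.exp (-a*t) * f t)) (volume.restrict (Set.Ioi (0:ℝ))) :=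
      (I2int.const_mul (1/a)).add (I1int.const_mul (2/a^2))
    rw [h1, hμ, integral_add hadd (I0int.const_mul (2/a^3)),
      integral_add (I2int.const_mul (1/a)) (I1int.const_mul (2/a^2)),
      integral_const_mul, integral_const_mul, integral_const_mul]
  rw [hL, hswap, hR]
  field_simp
end

section
/- Let X and T be independent nonnegative real-valued random variables on a probability space, where X is exponentially distributed with rate λ1 > 0. Then E[X·T·1_{X > T}] = E[T²·exp(−λ1·T)] + E[T·exp(−λ1·T)]/λ1. -/
open MeasureTheory ProbabilityTheory Real

open Set Filter Topology
open scoped NNReal ENNReal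

lemma auxXT_u_exp {u : ℝ} (hu : 0 ≤ u) : u * Real.exp (-u) ≤ 1 := by
  have h : u ≤ Real.exp u := by linarith [Real.add_one_le_exp u]
  calc u * Real.exp (-u) ≤ Real.exp u * Real.exp (-u) :=
        mul_le_mul_of_nonneg_right h (Real.exp_nonneg _)
    _ = 1 := by rw [← Real.exp_add]; simp

lemma auxXT_bound1 {l1 : ℝ} (hl1 : 0 < l1) {t : ℝ} (ht : 0 ≤ t) :
    t * Real.exp (-(l1 * t)) ≤ 1 / l1 := by
  rw [le_div_iff₀ hl1]
  calc t * Real.exp (-(l1 * t)) * l1 = (l1 * t) * Real.exp (-(l1 * t)) := by ring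
    _ ≤ 1 := auxXT_u_exp (by positivity)

lemma auxXT_bound2 {l1 : ℝ} (hl1 : 0 < l1) {t : ℝ} (ht : 0 ≤ t) :
    t ^ 2 * Real.exp (-(l1 * t)) ≤ 4 / l1 ^ 2 := by
  have h := auxXT_bound1 (half_pos hl1) ht
  have h2 : (1 : ℝ) / (l1 / 2) = 2 / l1 := one_div_div l1 2
  have hsq : (t * Real.exp (-(l1 / 2 * t))) ^ 2 = t ^ 2 * Real.exp (-(l1 * t)) := by
    rw [mul_pow, ← Real.exp_nat_mul]
    ring_nf
  calc t ^ 2 * Real.exp (-(l1 * t)) = (t * Real.exp (-(l1 / 2 * t))) ^ 2 := hsq.symm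
    _ ≤ (2 / l1) ^ 2 := by
        apply pow_le_pow_left₀ (by positivity) _ 2
        rw [← h2]; exact h
    _ = 4 / l1 ^ 2 := by ring

lemma auxXT_tendsto {l1 : ℝ} (hl1 : 0 < l1) :
    Tendsto (fun y : ℝ => -((y + 1 / l1) * Real.exp (-(l1 * y)))) atTop (𝓝 0) := by
  have base : Tendsto (fun u : ℝ => (u + 1) * Real.exp (-u)) atTop (𝓝 0) := by
    have h1 := Real.tendsto_pow_mul_exp_neg_atTop_nhds_zero 1
    have h2 := Real.tendsto_exp_neg_atTop_nhds_zero
    have := h1.add h2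
    simp only [pow_one, add_zero] at this
    refine this.congr fun u => by ring
  have hcomp : Tendsto (fun y : ℝ => l1 * y) atTop atTop :=
    Tendsto.const_mul_atTop hl1 tendsto_id
  have h3 : Tendsto (fun y : ℝ => (1 / l1) * ((l1 * y + 1) * Real.exp (-(l1 * y)))) atTop
      (𝓝 ((1 / l1) * 0)) := (base.comp hcomp).const_mul _
  rw [mul_zero] at h3
  have h4 : Tendsto (fun y : ℝ => (y + 1 / l1) * Real.exp (-(l1 * y))) atTop (𝓝 0) := by
    refine h3.congr fun y => ?_
    field_simp
  simpa using h4.neg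

lemma auxXT_hasDerivAt {l1 : ℝ} (hl1 : 0 < l1) (x : ℝ) :
    HasDerivAt (fun y : ℝ => -((y + 1 / l1) * Real.exp (-(l1 * y))))
      (x * (l1 * Real.exp (-(l1 * x)))) x := by
  have h1 : HasDerivAt (fun y : ℝ => y + 1 / l1) 1 x := (hasDerivAt_id x).add_const _
  have h2 : HasDerivAt (fun y : ℝ => Real.exp (-(l1 * y))) (Real.exp (-(l1 * x)) * (-l1)) x := by
    have := (((hasDerivAt_id x).const_mul l1).neg).exp
    simpa using this
  have h : HasDerivAt (fun y : ℝ => -((y + 1 / l1) * Real.exp (-(l1 * y)))) _ x := (h1.mul h2).neg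
  convert h using 1
  field_simp
  ring

lemma auxXT_integrableOn {l1 : ℝ} (hl1 : 0 < l1) {t : ℝ} (ht : 0 ≤ t) :
    IntegrableOn (fun x => x * (l1 * Real.exp (-(l1 * x)))) (Set.Ioi t) := by
  refine integrableOn_Ioi_deriv_of_nonneg' (fun x _ => auxXT_hasDerivAt hl1 x)
    (fun x hx => ?_) (auxXT_tendsto hl1)
  have : (0:ℝ) < x := lt_of_le_of_lt ht hx
  positivity

lemma auxXT_integral {l1 : ℝ} (hl1 : 0 < l1) {t : ℝ} (ht : 0 ≤ t) :
    ∫ x in Set.Ioi t, x * (l1 * Real.exp (-(l1 * x))) =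
      (t + 1 / l1) * Real.exp (-(l1 * t)) := by
  have h := integral_Ioi_of_hasDerivAt_of_nonneg' (fun x _ => auxXT_hasDerivAt hl1 x)
    (fun x hx => by
      have : (0:ℝ) < x := lt_of_le_of_lt ht hx
      positivity) (auxXT_tendsto hl1)
  rw [h]
  ring

/-- Equation (mnvbh00): `E[X·T·1_{X > T}] = E[T²·e^{−λ1 T}] + E[T·e^{−λ1 T}]/λ1`
for independent nonnegative `X ~ Exp(λ1)` and `T`. -/
theorem expectation_XT_indicator_long_event
    {Ω : Type*} [MeasureSpace Ω] [IsProbabilityMeasure (ℙ : Measure Ω)]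
    (l1 : ℝ) (hl1 : 0 < l1) (X T : Ω → ℝ)
    (hXm : Measurable X) (hTm : Measurable T)
    (hXnonneg : ∀ ω, 0 ≤ X ω) (hTnonneg : ∀ ω, 0 ≤ T ω)
    (hindep : IndepFun X T ℙ)
    (hX : Measure.map X ℙ = expMeasure l1) :
    (∫ ω in {ω | T ω < X ω}, X ω * T ω ∂ℙ) =
      (∫ ω, (T ω) ^ 2 * Real.exp (-l1 * T ω) ∂ℙ)
        + (∫ ω, T ω * Real.exp (-l1 * T ω) ∂ℙ) / l1 := by
  simp only [neg_mul]
  set μ := expMeasure l1 with hμ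
  set ν := Measure.map T ℙ with hν
  haveI : IsProbabilityMeasure μ := isProbabilityMeasure_expMeasure hl1
  haveI : IsProbabilityMeasure ν := Measure.isProbabilityMeasure_map hTm.aemeasurable
  set p : ℝ → ℝ≥0 := fun x => (exponentialPDFReal l1 x).toNNReal with hp
  have hpm : Measurable p := (measurable_exponentialPDFReal l1).real_toNNReal
  have hd : (fun x => (p x : ℝ≥0∞)) = gammaPDF 1 l1 := by funext x; rfl
  have hexp_eq : μ = (MeasureTheory.volume : Measure ℝ).withDensity (fun x => (p x : ℝ≥0∞)) := by
    rw [hμ]; unfold expMeasure gammaMeasure; rw [hd]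
  have hpdf : ∀ x : ℝ, 0 ≤ x → (p x : ℝ) = l1 * Real.exp (-(l1 * x)) := by
    intro x hx
    rw [hp, Real.coe_toNNReal _ (exponentialPDFReal_nonneg hl1 x)]
    simp [exponentialPDFReal, gammaPDFReal, hx, Real.rpow_one, Real.Gamma_one,
      Real.rpow_zero]
  set F : ℝ × ℝ → ℝ := fun q => Set.indicator {q : ℝ × ℝ | q.1 < q.2} (fun q => q.2 * q.1) q
    with hF
  have hFm : Measurable F :=
    (measurable_snd.mul measurable_fst).indicator (measurableSet_lt measurable_fst measurable_snd)
  have hmap : Measure.map (fun ω => (T ω, X ω)) ℙ = ν.prod μ := by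
    have h := (indepFun_iff_map_prod_eq_prod_map_map hTm.aemeasurable
      hXm.aemeasurable).mp hindep.symm
    rw [hX] at h
    exact h
  have hae : ∀ᵐ t ∂ν, 0 ≤ t := by
    rw [hν, ae_map_iff hTm.aemeasurable (measurableSet_Ici (a := (0:ℝ)))]
    exact ae_of_all _ hTnonneg
  -- inner integral
  have hFt : ∀ t : ℝ, (fun x => F (t, x)) = Set.indicator (Set.Ioi t) (fun x => x * t) := by
    intro t
    funext x
    by_cases h : t < x <;> simp [hF, Set.indicator_apply, Set.mem_Ioi, h]
  have hinner_val : ∀ t : ℝ, 0 ≤ t → ∫ x, F (t, x) ∂μ =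
      t ^ 2 * Real.exp (-(l1 * t)) + t * Real.exp (-(l1 * t)) / l1 := by
    intro t ht
    rw [hFt t, integral_indicator measurableSet_Ioi, hexp_eq,
      setIntegral_withDensity_eq_setIntegral_smul hpm _ measurableSet_Ioi]
    have hcong : ∫ x in Set.Ioi t, p x • (x * t) =
        ∫ x in Set.Ioi t, t * (x * (l1 * Real.exp (-(l1 * x)))) := by
      refine setIntegral_congr_fun measurableSet_Ioi fun x hx => ?_
      rw [NNReal.smul_def, smul_eq_mul, hpdf x (le_trans ht (le_of_lt hx))]
      ring
    rw [hcong, integral_const_mul, auxXT_integral hl1 ht]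
    field_simp
  have hinner_int : ∀ t : ℝ, 0 ≤ t → Integrable (fun x => F (t, x)) μ := by
    intro t ht
    rw [hFt t, hexp_eq, integrable_withDensity_iff_integrable_smul hpm]
    have heq : (fun x => p x • Set.indicator (Set.Ioi t) (fun x => x * t) x) =
        Set.indicator (Set.Ioi t) (fun x => (p x : ℝ) * (x * t)) := by
      funext x
      by_cases hx : x ∈ Set.Ioi t <;>
        simp [Set.indicator_apply, hx, NNReal.smul_def]
    rw [heq, integrable_indicator_iff measurableSet_Ioi]
    refine IntegrableOn.congr_fun (Integrable.const_mul (auxXT_integrableOn hl1 ht) t) ?_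
      measurableSet_Ioi
    intro x hx
    show t * (x * (l1 * Real.exp (-(l1 * x)))) = (p x : ℝ) * (x * t)
    rw [hpdf x (le_trans ht (le_of_lt hx))]
    ring
  have hFnonneg : ∀ t : ℝ, 0 ≤ t → ∀ x : ℝ, 0 ≤ F (t, x) := by
    intro t ht x
    rw [hF]
    refine Set.indicator_apply_nonneg fun h => ?_
    simp only [Set.mem_setOf_eq] at h
    exact mul_nonneg (le_trans ht (le_of_lt h)) ht
  -- integrability on product
  have hFint : Integrable F (ν.prod μ) := by
    rw [integrable_prod_iff hFm.aestronglyMeasurable]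
    constructor
    · filter_upwards [hae] with t ht using hinner_int t ht
    · refine Integrable.mono' (integrable_const (4 / l1 ^ 2 + 1 / l1 ^ 2))
        (hFm.aestronglyMeasurable.norm.integral_prod_right') ?_
      filter_upwards [hae] with t ht
      have hnorm : ∫ x, ‖F (t, x)‖ ∂μ = ∫ x, F (t, x) ∂μ := by
        refine integral_congr_ae (ae_of_all _ fun x => ?_)
        exact Real.norm_of_nonneg (hFnonneg t ht x)
      rw [Real.norm_of_nonneg (integral_nonneg fun x => norm_nonneg _), hnorm,
        hinner_val t ht]
      have b2 := auxXT_bound2 hl1 ht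
      have b1 := auxXT_bound1 hl1 ht
      have b1' : t * Real.exp (-(l1 * t)) / l1 ≤ 1 / l1 ^ 2 := by
        have := (div_le_div_iff_of_pos_right hl1).mpr b1
        rwa [div_div, ← pow_two] at this
      linarith
  -- chain
  have hset : MeasurableSet {ω | T ω < X ω} := measurableSet_lt hTm hXm
  have hexpc : Continuous fun t : ℝ => Real.exp (-(l1 * t)) :=
    Real.continuous_exp.comp (continuous_const.mul continuous_id).neg
  have hg : Continuous fun t : ℝ => t ^ 2 * Real.exp (-(l1 * t)) +
      t * Real.exp (-(l1 * t)) / l1 :=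
    ((continuous_pow 2).mul hexpc).add ((continuous_id.mul hexpc).div_const l1)
  have hI2 : Integrable (fun ω => (T ω) ^ 2 * Real.exp (-(l1 * T ω))) ℙ := by
    refine Integrable.mono' (integrable_const (4 / l1 ^ 2)) ?_ (ae_of_all _ fun ω => ?_)
    · exact ((hTm.pow_const 2).mul ((hTm.const_mul l1).neg.exp)).aestronglyMeasurable
    · rw [Real.norm_of_nonneg (by positivity)]
      exact auxXT_bound2 hl1 (hTnonneg ω)
  have hI1 : Integrable (fun ω => T ω * Real.exp (-(l1 * T ω))) ℙ := by
    refine Integrable.mono' (integrable_const (1 / l1)) ?_ (ae_of_all _ fun ω => ?_)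
    · exact (hTm.mul ((hTm.const_mul l1).neg.exp)).aestronglyMeasurable
    · rw [Real.norm_of_nonneg (mul_nonneg (hTnonneg ω) (Real.exp_nonneg _))]
      exact auxXT_bound1 hl1 (hTnonneg ω)
  calc (∫ ω in {ω | T ω < X ω}, X ω * T ω ∂ℙ)
      = ∫ ω, F (T ω, X ω) ∂ℙ := by
        rw [← integral_indicator hset]
        refine integral_congr_ae (ae_of_all _ fun ω => ?_)
        by_cases h : T ω < X ω <;> simp [hF, Set.indicator_apply, h]
    _ = ∫ q, F q ∂(ν.prod μ) := by
        rw [← hmap, integral_map (hTm.prodMk hXm).aemeasurable hFm.aestronglyMeasurable]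
    _ = ∫ t, ∫ x, F (t, x) ∂μ ∂ν := integral_prod F hFint
    _ = ∫ t, (t ^ 2 * Real.exp (-(l1 * t)) + t * Real.exp (-(l1 * t)) / l1) ∂ν := by
        refine integral_congr_ae ?_
        filter_upwards [hae] with t ht using hinner_val t ht
    _ = ∫ ω, ((T ω) ^ 2 * Real.exp (-(l1 * T ω)) + T ω * Real.exp (-(l1 * T ω)) / l1) ∂ℙ := by
        rw [hν, integral_map hTm.aemeasurable hg.aestronglyMeasurable]
    _ = (∫ ω, (T ω) ^ 2 * Real.exp (-(l1 * T ω)) ∂ℙ)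
        + (∫ ω, T ω * Real.exp (-(l1 * T ω)) ∂ℙ) / l1 := by
        rw [integral_add hI2 (hI1.div_const l1), integral_div]
end
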